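/- Let K be a field. Then the semi-invariant subrings of K are precisely its subfields. In particular, every subring R₀ of K that arises as an equalizer of pairs of ring homomorphisms out of K (into arbitrary rings) is a subfield. -/

import Mathlib

open TensorProduct in
/-- If `x ⊗ 1 = 1 ⊗ x` in `K ⊗[F] K` for a subfield `F` of a field `K`, then `x ∈ F`. -/
lemma mem_subfield_of_tmul_eq {K : Type u} [Field K] (F : Subfield K) (x : K)
    (h : x ⊗ₜ[F] (1 : K) = (1 : K) ⊗ₜ[F] x) : x ∈ F := by
  by_contra hx
  have h1 : x ∉ Submodule.span F ({1} : Set K) := by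
    intro hsp
    rw [Submodule.mem_span_singleton] at hsp
    obtain ⟨c, hc⟩ := hsp
    apply hx
    have : c • (1 : K) = (c : K) := by
      rw [Subring.smul_def, smul_eq_mul, mul_one]
    rw [← hc, this]
    exact c.2
  have hxne1 : x ≠ 1 := fun h' => hx (h' ▸ F.one_mem)
  have li1 : LinearIndependent F (fun y : ({1} : Set K) => (y : K)) :=
    LinearIndepOn.linearIndependent ((linearIndepOn_singleton_iff F).mpr one_ne_zero : LinearIndepOn F id ({1} : Set K))
  have li2 : LinearIndepOn F id (insert x ({1} : Set K)) :=
    LinearIndepOn.id_insert li1 h1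
  set B := Module.Basis.extend li2 with hB
  have hxt : x ∈ li2.extend (Set.subset_univ _) :=
    li2.subset_extend _ (Set.mem_insert x _)
  have h1t : (1 : K) ∈ li2.extend (Set.subset_univ _) :=
    li2.subset_extend _ (Set.mem_insert_of_mem _ rfl)
  set f : K →ₗ[F] F := B.coord ⟨x, hxt⟩ with hf
  have hfx : f x = 1 := by
    have e : f x = f (B ⟨x, hxt⟩) :=
      congrArg f (Module.Basis.extend_apply_self li2 ⟨x, hxt⟩).symm
    rw [e, hf, Module.Basis.coord_apply, Module.Basis.repr_self, Finsupp.single_eq_same]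
  have hf1 : f 1 = 0 := by
    have e : f 1 = f (B ⟨(1 : K), h1t⟩) :=
      congrArg f (Module.Basis.extend_apply_self li2 ⟨1, h1t⟩).symm
    rw [e, hf, Module.Basis.coord_apply, Module.Basis.repr_self,
      Finsupp.single_eq_of_ne (fun h' => hxne1 (congrArg Subtype.val h'))]
  -- build the linear map g : K ⊗[F] K →ₗ[F] K, a ⊗ b ↦ f a • b
  set g : K ⊗[F] K →ₗ[F] K := TensorProduct.lift ((LinearMap.lsmul F K).comp f) with hg
  have := congrArg g h
  rw [hg] at this
  erw [TensorProduct.lift.tmul, TensorProduct.lift.tmul] at this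
  simp only [TensorProduct.lift.tmul, LinearMap.comp_apply, LinearMap.lsmul_apply] at this
  rw [hfx, hf1, one_smul, zero_smul] at this
  exact one_ne_zero this

/-- The semi-invariant subrings of a field `K` are precisely its subfields.
(1) Any subring of `K` arising as a joint equalizer of pairs of ring homomorphisms
out of `K` is closed under inverses, i.e. is a subfield.
(2) Conversely, every subfield of `K` is such an equalizer. -/
theorem semiInvariant_subrings_of_field_are_subfields {K : Type u} [Field K] :
    (∀ {I : Type v} (Sf : I → RingCat.{w}) (ψ₁ ψ₂ : ∀ i, K →+* Sf i)
      (R₀ : Subring K),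
      (R₀ : Set K) = {x : K | ∀ i, ψ₁ i x = ψ₂ i x} →
      ∀ x ∈ R₀, x⁻¹ ∈ R₀) ∧
    (∀ F : Subfield K,
      ∃ (S' : RingCat.{u}) (φ₁ φ₂ : K →+* S'),
        {x : K | φ₁ x = φ₂ x} = (F : Set K)) := by
  constructor
  · -- (1) equalizer subrings are closed under inverses
    intro I Sf ψ₁ ψ₂ R₀ hR₀ x hx
    have hx' : ∀ i, ψ₁ i x = ψ₂ i x := by
      have : x ∈ (R₀ : Set K) := hx
      rwa [hR₀] at this
    have : x⁻¹ ∈ (R₀ : Set K) := by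
      rw [hR₀]
      intro i
      rcases eq_or_ne x 0 with rfl | hx0
      · simp
      · -- both images of x⁻¹ are two-sided inverses of the common image of x
        have hl : ψ₁ i x⁻¹ * ψ₁ i x = 1 := by
          rw [← map_mul, inv_mul_cancel₀ hx0, map_one]
        have hr : ψ₂ i x * ψ₂ i x⁻¹ = 1 := by
          rw [← map_mul, mul_inv_cancel₀ hx0, map_one]
        calc ψ₁ i x⁻¹ = ψ₁ i x⁻¹ * (ψ₂ i x * ψ₂ i x⁻¹) := by rw [hr, mul_one]
          _ = (ψ₁ i x⁻¹ * ψ₁ i x) * ψ₂ i x⁻¹ := by rw [hx' i, mul_assoc]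
          _ = ψ₂ i x⁻¹ := by rw [hl, one_mul]
    exact this
  · -- (2) every subfield is an equalizer: use K ⊗[F] K
    intro F
    refine ⟨RingCat.of (TensorProduct F K K),
      Algebra.TensorProduct.includeLeftRingHom,
      Algebra.TensorProduct.includeRight.toRingHom, ?_⟩
    ext x
    simp only [Set.mem_setOf_eq, SetLike.mem_coe]
    constructor
    · intro h
      exact mem_subfield_of_tmul_eq F x h
    · intro hx
      show x ⊗ₜ[F] (1 : K) = (1 : K) ⊗ₜ[F] x
      obtain ⟨c, rfl⟩ : ∃ c : F, (c : K) = x := ⟨⟨x, hx⟩, rfl⟩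
      have h1 : (Algebra.TensorProduct.includeLeft (R := F) (A := K) (B := K) (S := F))
          (algebraMap F K c) = algebraMap F (TensorProduct F K K) c := AlgHom.commutes _ c
      have h2 : (Algebra.TensorProduct.includeRight (R := F) (A := K) (B := K))
          (algebraMap F K c) = algebraMap F (TensorProduct F K K) c := AlgHom.commutes _ c
      exact h1.trans h2.symm
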